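/- The category of quantitative L-algebras has coequalizers: given nonexpanding homomorphisms f₁, f₂ : A → B of quantitative L-algebras, there exist a quantitative L-algebra C and a surjective nonexpanding homomorphism q : B → C with q ∘ f₁ = q ∘ f₂ such that for every quantitative L-algebra W and every nonexpanding homomorphism h : B → W with h ∘ f₁ = h ∘ f₂ there is a unique nonexpanding homomorphism k : C → W with h = k ∘ q. -/

import Mathlib

open FirstOrder FirstOrder.Language

/-- A quantitative `L`-algebra: all operations are nonexpanding for the sup metric. -/
def QuantAlg (L : Language) (A : Type*) [EMetricSpace A] [L.Structure A] : Prop :=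
  ∀ (n : ℕ) (σ : L.Functions n) (x y : Fin n → A),
    edist (Structure.funMap σ x) (Structure.funMap σ y) ≤ ⨆ i, edist (x i) (y i)

/-- A homomorphism of quantitative `L`-algebras: a nonexpanding map preserving all
operations. -/
def IsQHom (L : Language) (A B : Type*) [EMetricSpace A] [L.Structure A]
    [EMetricSpace B] [L.Structure B] (f : A → B) : Prop :=
  (∀ x y : A, edist (f x) (f y) ≤ edist x y) ∧
  ∀ (n : ℕ) (σ : L.Functions n) (x : Fin n → A),
    f (Structure.funMap σ x) = Structure.funMap σ (f ∘ x)

/-- A bundled extended metric space with an `L`-structure. -/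
structure MetAlg (L : Language) where
  carrier : Type u
  [emet : EMetricSpace carrier]
  [str : L.Structure carrier]

attribute [instance] MetAlg.emet MetAlg.str

section Coeq

variable (L : Language) {A B : Type u} [EMetricSpace A] [L.Structure A]
  [EMetricSpace B] [L.Structure B]

/-- Admissible pseudo-emetrics on `B`: below `edist`, vanishing on pairs `(f₁ a, f₂ a)`,
and compatible with operations. -/
def Adm (f₁ f₂ : A → B) (e : B → B → ENNReal) : Prop :=
  (∀ x, e x x = 0) ∧ (∀ x y, e x y = e y x) ∧
  (∀ x y z, e x z ≤ e x y + e y z) ∧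
  (∀ x y, e x y ≤ edist x y) ∧ (∀ a, e (f₁ a) (f₂ a) = 0) ∧
  (∀ (n : ℕ) (σ : L.Functions n) (x y : Fin n → B),
    e (Structure.funMap σ x) (Structure.funMap σ y) ≤ ⨆ i, e (x i) (y i))

/-- The largest admissible pseudo-emetric. -/
noncomputable def dd (f₁ f₂ : A → B) : B → B → ENNReal :=
  fun x y => ⨆ e : {e : B → B → ENNReal // Adm L f₁ f₂ e}, e.1 x y

variable (f₁ f₂ : A → B)

theorem le_dd {e : B → B → ENNReal} (he : Adm L f₁ f₂ e) (x y : B) :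
    e x y ≤ dd L f₁ f₂ x y :=
  le_iSup (fun e : {e : B → B → ENNReal // Adm L f₁ f₂ e} => e.1 x y) ⟨e, he⟩

theorem dd_self (x : B) : dd L f₁ f₂ x x = 0 :=
  le_antisymm (iSup_le fun e => (e.2.1 x).le) zero_le

theorem dd_comm (x y : B) : dd L f₁ f₂ x y = dd L f₁ f₂ y x := by
  unfold dd; exact iSup_congr fun e => e.2.2.1 x y

theorem dd_triangle (x y z : B) : dd L f₁ f₂ x z ≤ dd L f₁ f₂ x y + dd L f₁ f₂ y z :=
  iSup_le fun e => (e.2.2.2.1 x y z).trans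
    (add_le_add (le_dd L f₁ f₂ e.2 x y) (le_dd L f₁ f₂ e.2 y z))

theorem dd_le_edist (x y : B) : dd L f₁ f₂ x y ≤ edist x y :=
  iSup_le fun e => e.2.2.2.2.1 x y

theorem dd_coeq (a : A) : dd L f₁ f₂ (f₁ a) (f₂ a) = 0 :=
  le_antisymm (iSup_le fun e => (e.2.2.2.2.2.1 a).le) zero_le

theorem dd_op (n : ℕ) (σ : L.Functions n) (x y : Fin n → B) :
    dd L f₁ f₂ (Structure.funMap σ x) (Structure.funMap σ y) ≤
      ⨆ i, dd L f₁ f₂ (x i) (y i) :=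
  iSup_le fun e => (e.2.2.2.2.2.2 n σ x y).trans
    (iSup_mono fun i => le_dd L f₁ f₂ e.2 (x i) (y i))

/-- The setoid identifying points at `dd`-distance zero. -/
def QSetoid : Setoid B :=
  ⟨fun x y => dd L f₁ f₂ x y = 0,
    fun x => dd_self L f₁ f₂ x,
    fun {x y} h => by rw [dd_comm]; exact h,
    fun {x y z} h₁ h₂ => le_antisymm
      (by calc dd L f₁ f₂ x z ≤ dd L f₁ f₂ x y + dd L f₁ f₂ y z := dd_triangle L f₁ f₂ x y z
            _ = 0 := by rw [h₁, h₂, add_zero]) zero_le⟩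

/-- The coequalizer carrier. -/
def QCoeq : Type u := Quotient (QSetoid L f₁ f₂)

theorem dd_lift_wd (x₁ y₁ x₂ y₂ : B) (hx : dd L f₁ f₂ x₁ x₂ = 0)
    (hy : dd L f₁ f₂ y₁ y₂ = 0) :
    dd L f₁ f₂ x₁ y₁ = dd L f₁ f₂ x₂ y₂ := by
  apply le_antisymm
  · calc dd L f₁ f₂ x₁ y₁ ≤ dd L f₁ f₂ x₁ x₂ + dd L f₁ f₂ x₂ y₁ := dd_triangle L f₁ f₂ _ _ _
      _ ≤ dd L f₁ f₂ x₁ x₂ + (dd L f₁ f₂ x₂ y₂ + dd L f₁ f₂ y₂ y₁) :=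
        add_le_add_right (dd_triangle L f₁ f₂ _ _ _) _
      _ = dd L f₁ f₂ x₂ y₂ := by
        rw [hx, dd_comm L f₁ f₂ y₂ y₁, hy, zero_add, add_zero]
  · calc dd L f₁ f₂ x₂ y₂ ≤ dd L f₁ f₂ x₂ x₁ + dd L f₁ f₂ x₁ y₂ := dd_triangle L f₁ f₂ _ _ _
      _ ≤ dd L f₁ f₂ x₂ x₁ + (dd L f₁ f₂ x₁ y₁ + dd L f₁ f₂ y₁ y₂) :=
        add_le_add_right (dd_triangle L f₁ f₂ _ _ _) _
      _ = dd L f₁ f₂ x₁ y₁ := by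
        rw [dd_comm L f₁ f₂ x₂ x₁, hx, hy, zero_add, add_zero]

noncomputable instance : EMetricSpace (QCoeq L f₁ f₂) where
  edist := Quotient.lift₂ (dd L f₁ f₂) (fun _ _ _ _ hx hy => dd_lift_wd L f₁ f₂ _ _ _ _ hx hy)
  edist_self := fun x => Quotient.inductionOn x fun b => dd_self L f₁ f₂ b
  edist_comm := fun x y => Quotient.inductionOn₂ x y fun a b => dd_comm L f₁ f₂ a b
  edist_triangle := fun x y z =>
    Quotient.inductionOn₃ x y z fun a b c => dd_triangle L f₁ f₂ a b c
  eq_of_edist_eq_zero := fun {x y} h =>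
    Quotient.inductionOn₂ x y (fun _ _ h => Quotient.sound h) h

/-- The `L`-structure on the coequalizer. -/
noncomputable def QStr (hL : ∀ n, IsEmpty (L.Relations n)) :
    L.Structure (QCoeq L f₁ f₂) where
  funMap {n} σ x := Quotient.mk _ (Structure.funMap σ (fun i => (x i).out))
  RelMap {n} r _ := (hL n).elim r

theorem mk_out_rel (b : B) :
    dd L f₁ f₂ ((Quotient.mk (QSetoid L f₁ f₂) b).out) b = 0 :=
  Quotient.mk_out (s := QSetoid L f₁ f₂) b

end Coeq

/-- The category of quantitative `L`-algebras has coequalizers. -/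
theorem qalg_coequalizers (L : Language) (hL : ∀ n, IsEmpty (L.Relations n))
    {A B : Type u} [EMetricSpace A] [L.Structure A] [EMetricSpace B] [L.Structure B]
    (hA : QuantAlg L A) (hB : QuantAlg L B)
    (f₁ f₂ : A → B) (hf₁ : IsQHom L A B f₁) (hf₂ : IsQHom L A B f₂) :
    ∃ (C : MetAlg.{u} L) (q : B → C.carrier),
      QuantAlg L C.carrier ∧ IsQHom L B C.carrier q ∧ Function.Surjective q ∧
      q ∘ f₁ = q ∘ f₂ ∧
      ∀ (W : Type*) [EMetricSpace W] [L.Structure W], QuantAlg L W →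
        ∀ h : B → W, IsQHom L B W h → h ∘ f₁ = h ∘ f₂ →
          ∃! k : C.carrier → W, IsQHom L C.carrier W k ∧ h = k ∘ q := by
  letI str : L.Structure (QCoeq L f₁ f₂) := QStr L f₁ f₂ hL
  refine ⟨⟨QCoeq L f₁ f₂⟩, Quotient.mk _, ?_, ⟨?_, ?_⟩, ?_, ?_, ?_⟩
  · -- QuantAlg
    intro n σ x y
    show dd L f₁ f₂ (Structure.funMap σ fun i => (x i).out)
        (Structure.funMap σ fun i => (y i).out) ≤ ⨆ i, edist (x i) (y i)
    refine (dd_op L f₁ f₂ n σ _ _).trans (iSup_mono fun i => ?_)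
    conv_rhs => rw [← Quotient.out_eq (x i), ← Quotient.out_eq (y i)]
    exact le_of_eq rfl
  · -- nonexpanding
    intro x y
    exact dd_le_edist L f₁ f₂ x y
  · -- operation-preserving
    intro n σ x
    show Quotient.mk _ (Structure.funMap σ x) =
      Quotient.mk _ (Structure.funMap σ fun i => (Quotient.mk (QSetoid L f₁ f₂) (x i)).out)
    apply Quotient.sound
    show dd L f₁ f₂ _ _ = 0
    refine le_antisymm ((dd_op L f₁ f₂ n σ _ _).trans ?_) zero_le
    refine iSup_le fun i => ?_
    rw [dd_comm]
    exact (mk_out_rel L f₁ f₂ (x i)).le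
  · -- surjective
    exact Quotient.exists_rep
  · -- coequalizes
    funext a
    exact Quotient.sound (dd_coeq L f₁ f₂ a)
  · -- universal property
    intro W _ _ hW h hh hco
    have hadm : Adm L f₁ f₂ (fun x y => edist (h x) (h y)) := by
      refine ⟨fun x => edist_self _, fun x y => edist_comm _ _,
        fun x y z => edist_triangle _ _ _, hh.1, fun a => ?_, fun n σ x y => ?_⟩
      · show edist (h (f₁ a)) (h (f₂ a)) = 0
        have : h (f₁ a) = h (f₂ a) := congrFun hco a
        rw [this, edist_self]
      · show edist (h (Structure.funMap σ x)) (h (Structure.funMap σ y)) ≤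
          ⨆ i, edist (h (x i)) (h (y i))
        rw [hh.2 n σ x, hh.2 n σ y]
        exact hW n σ _ _
    have hker : ∀ x y : B, dd L f₁ f₂ x y = 0 → h x = h y := by
      intro x y hxy
      have := (le_dd L f₁ f₂ hadm x y).trans hxy.le
      exact edist_le_zero.mp this
    refine ⟨Quotient.lift h hker, ⟨⟨?_, ?_⟩, ?_⟩, ?_⟩
    · intro x y
      refine Quotient.inductionOn₂ x y fun a b => ?_
      exact le_dd L f₁ f₂ hadm a b
    · intro n σ x
      show h (Structure.funMap σ fun i => (x i).out) = _
      rw [hh.2 n σ]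
      show Structure.funMap σ (fun i => h ((x i).out)) = Structure.funMap σ _
      congr 1
      funext i
      show h ((x i).out) = Quotient.lift h hker (x i)
      conv_rhs => rw [← Quotient.out_eq (x i)]
      rfl
    · rfl
    · rintro k ⟨hk, rfl⟩
      funext c
      refine Quotient.inductionOn c fun b => ?_
      rfl
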